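/- Assume ω₀ = −(n−1)/2 and that σ = 0 in case n > 3 (σ ∈ ℝ arbitrary in case n = 3), and set γ̃ = (n−1)/2. Then every brane scale function f satisfies on (−a, 0) the identity f″ + γ̃·f′² = (Λ/n)·e^{2f} − γ̃·κ̃ + (κ²/n²)·( −λ(f)·ρ₀²·e^{−(n−1)f − 2μ̃(f)} + (2 − λ(f))·σ·ρ₀·e^{−μ̃(f)} + (γ̃ + 1)·σ²·e^{2f} ). -/

import Mathlib

set_option maxHeartbeats 1000000 in
/-- For `ω₀ = -(n-1)/2` (and `σ = 0` if `n > 3`), with `γ = (n-1)/2`, every brane scale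
function satisfies the identity obtained by differentiating the modified Friedmann
equation. -/
theorem differentiated_friedmann
    (n : ℕ) (hn : 3 ≤ n)
    (m Λ κt κ σ ω₀ ρ₀ : ℝ)
    (hm : 0 < m) (hΛ : Λ ≤ 0)
    (hκt : κt = -1 ∨ κt = 0 ∨ κt = 1) (hΛκt : Λ = 0 → κt = 1)
    (hκ : κ ≠ 0) (hρ₀ : 0 < ρ₀)
    (lam μt : ℝ → ℝ)
    (hlam : ContDiff ℝ (⊤ : ℕ∞) lam)
    (hlam0 : Filter.Tendsto lam Filter.atBot (nhds 0))
    (hμt : ∀ t : ℝ, HasDerivAt μt (lam t) t)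
    (hμt0 : Filter.Tendsto μt Filter.atBot (nhds 0))
    (a : ℝ) (ha : 0 < a) (f : ℝ → ℝ)
    (hf : ContDiffOn ℝ (⊤ : ℕ∞) f (Set.Ioo (-a) 0))
    (hf' : ∀ τ ∈ Set.Ioo (-a) (0:ℝ), deriv f τ < 0)
    (hfb : Filter.Tendsto f (nhdsWithin 0 (Set.Iio 0)) Filter.atBot)
    (hFried : ∀ τ ∈ Set.Ioo (-a) (0:ℝ),
      (deriv f τ) ^ 2
        = m * Real.exp (-((n : ℝ) - 1) * f τ)
          + (2 * Λ / ((n : ℝ) * ((n : ℝ) + 1))) * Real.exp (2 * f τ) - κt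
          + (κ ^ 2 / (n : ℝ) ^ 2)
            * (σ + ρ₀ * Real.exp (-((n : ℝ) + ω₀) * f τ - μt (f τ))) ^ 2
            * Real.exp (2 * f τ))
    (hω₀ : ω₀ = -((n : ℝ) - 1) / 2)
    (hσ : 3 < n → σ = 0) :
    ∀ τ ∈ Set.Ioo (-a) (0:ℝ),
      deriv (deriv f) τ + (((n : ℝ) - 1) / 2) * (deriv f τ) ^ 2
        = Λ / (n : ℝ) * Real.exp (2 * f τ) - (((n : ℝ) - 1) / 2) * κt
          + κ ^ 2 / (n : ℝ) ^ 2
            * (-(lam (f τ)) * ρ₀ ^ 2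
                  * Real.exp (-((n : ℝ) - 1) * f τ - 2 * μt (f τ))
               + (2 - lam (f τ)) * σ * ρ₀ * Real.exp (-μt (f τ))
               + (((n : ℝ) - 1) / 2 + 1) * σ ^ 2 * Real.exp (2 * f τ)) := by
  intro τ hτ
  have hs : IsOpen (Set.Ioo (-a) (0:ℝ)) := isOpen_Ioo
  have hmem : Set.Ioo (-a) (0:ℝ) ∈ nhds τ := hs.mem_nhds hτ
  have hd1 : HasDerivAt f (deriv f τ) τ :=
    ((hf.contDiffAt hmem).differentiableAt (by simp)).hasDerivAt
  have hfd : ContDiffOn ℝ (⊤ : ℕ∞) (deriv f) (Set.Ioo (-a) 0) :=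
    hf.deriv_of_isOpen hs (by exact_mod_cast le_top)
  have hd2 : HasDerivAt (deriv f) (deriv (deriv f) τ) τ :=
    ((hfd.contDiffAt hmem).differentiableAt (by simp)).hasDerivAt
  set x := f τ with hx
  set v := deriv f τ with hv
  set u := μt x with hu
  set L := lam x with hL
  set c : ℝ := 2 * Λ / ((n : ℝ) * ((n : ℝ) + 1)) with hc
  set C : ℝ := κ ^ 2 / (n : ℝ) ^ 2 with hC
  set b : ℝ := -((n : ℝ) + ω₀) with hb
  set c1 : ℝ := -((n : ℝ) - 1) with hc1
  -- derivative of the RHS as a function of x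
  have hinner : HasDerivAt (fun y => b * y - μt y) (b - lam x) x := by
    simpa using (((hasDerivAt_id x).const_mul b).fun_sub (hμt x))
  have hE : HasDerivAt (fun y => Real.exp (b * y - μt y))
      (Real.exp (b * x - u) * (b - lam x)) x := hinner.exp
  have hP : HasDerivAt (fun y => σ + ρ₀ * Real.exp (b * y - μt y))
      (ρ₀ * (Real.exp (b * x - u) * (b - lam x))) x :=
    by simpa using (hasDerivAt_const x σ).fun_add (hE.const_mul ρ₀)
  have hE2 : HasDerivAt (fun y => Real.exp (2 * y)) (Real.exp (2 * x) * 2) x := by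
    simpa using (((hasDerivAt_id x).const_mul (2:ℝ)).exp)
  have hE1 : HasDerivAt (fun y => Real.exp (c1 * y)) (Real.exp (c1 * x) * c1) x := by
    simpa using (((hasDerivAt_id x).const_mul c1).exp)
  set P : ℝ := σ + ρ₀ * Real.exp (b * x - u) with hPdef
  have hterm : HasDerivAt (fun y => C * (σ + ρ₀ * Real.exp (b * y - μt y)) ^ 2 * Real.exp (2 * y))
      ((C * (2 * P * (ρ₀ * (Real.exp (b * x - u) * (b - lam x))))) * Real.exp (2 * x)
        + C * P ^ 2 * (Real.exp (2 * x) * 2)) x := by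
    have h1 : HasDerivAt (fun y => C * (σ + ρ₀ * Real.exp (b * y - μt y)) ^ 2)
        (C * (2 * P * (ρ₀ * (Real.exp (b * x - u) * (b - lam x))))) x := by
      have := (hP.pow 2).const_mul C
      simpa [hPdef, mul_comm, mul_assoc, mul_left_comm] using this
    simpa using h1.fun_mul hE2
  set D : ℝ := m * (Real.exp (c1 * x) * c1) + c * (Real.exp (2 * x) * 2)
      + ((C * (2 * P * (ρ₀ * (Real.exp (b * x - u) * (b - lam x))))) * Real.exp (2 * x)
        + C * P ^ 2 * (Real.exp (2 * x) * 2)) with hD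
  have hF : HasDerivAt (fun y => m * Real.exp (c1 * y) + c * Real.exp (2 * y) - κt
      + C * (σ + ρ₀ * Real.exp (b * y - μt y)) ^ 2 * Real.exp (2 * y)) D x := by
    simpa [hD] using (((hE1.const_mul m).fun_add (hE2.const_mul c)).fun_sub (hasDerivAt_const x κt)).fun_add hterm
  have hcomp : HasDerivAt (fun t => m * Real.exp (c1 * f t) + c * Real.exp (2 * f t) - κt
      + C * (σ + ρ₀ * Real.exp (b * f t - μt (f t))) ^ 2 * Real.exp (2 * f t)) (D * v) τ :=
    hF.comp τ hd1
  have hsq : HasDerivAt (fun t => (deriv f t) ^ 2) (2 * v * deriv (deriv f) τ) τ := by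
    simpa [mul_comm, mul_assoc] using hd2.fun_pow 2
  have heq : (fun t => (deriv f t) ^ 2) =ᶠ[nhds τ]
      (fun t => m * Real.exp (c1 * f t) + c * Real.exp (2 * f t) - κt
      + C * (σ + ρ₀ * Real.exp (b * f t - μt (f t))) ^ 2 * Real.exp (2 * f t)) := by
    filter_upwards [hmem] with t ht
    simpa [hc1, hc, hC, hb, neg_add, sub_eq_add_neg, neg_mul, add_mul] using hFried t ht
  have hsq' : HasDerivAt (fun t => m * Real.exp (c1 * f t) + c * Real.exp (2 * f t) - κt
      + C * (σ + ρ₀ * Real.exp (b * f t - μt (f t))) ^ 2 * Real.exp (2 * f t))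
      (2 * v * deriv (deriv f) τ) τ := hsq.congr_of_eventuallyEq heq.symm
  have huniq : 2 * v * deriv (deriv f) τ = D * v := hsq'.unique hcomp
  have hvne : v ≠ 0 := ne_of_lt (hf' τ hτ)
  have hf'' : deriv (deriv f) τ = D / 2 := by
    have h2 : v * (2 * deriv (deriv f) τ) = v * D := by ring_nf; ring_nf at huniq; linarith
    have := mul_left_cancel₀ hvne h2
    linarith
  have hFr : v ^ 2 = m * Real.exp (c1 * x) + c * Real.exp (2 * x) - κt + C * P ^ 2 * Real.exp (2 * x) := by
    have := hFried τ hτ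
    simpa [hc1, hc, hC, hb, hPdef, hu, hx] using this
  rw [hf'', hFr]
  -- Now pure algebra
  have hnR : (n : ℝ) ≠ 0 := by exact_mod_cast Nat.pos_of_ne_zero (by omega) |>.ne'
  have hn1 : (n : ℝ) + 1 ≠ 0 := by positivity
  have hEsq : Real.exp (-((n : ℝ) - 1) * x - 2 * u)
      = Real.exp (b * x - u) ^ 2 * Real.exp (2 * x) := by
    rw [sq, ← Real.exp_add, ← Real.exp_add]
    congr 1
    rw [hb, hω₀, hc1]; ring
  rcases lt_or_eq_of_le hn with h3 | h3
  · have hσ0 : σ = 0 := hσ h3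
    subst hσ0
    rw [hEsq]
    simp only [hD, hPdef, hb, hω₀, hc1, hc, hC, hL]
    field_simp
    ring
  · have hn3 : (n : ℝ) = 3 := by rw [← h3]; norm_num
    have hEu : Real.exp (-u) = Real.exp (b * x - u) * Real.exp (2 * x) := by
      rw [← Real.exp_add]; congr 1; rw [hb, hω₀, hc1, hn3]; ring
    rw [hEsq, hEu]
    simp only [hD, hPdef, hb, hω₀, hc1, hc, hC, hL, hn3]
    norm_num
    field_simp
    ring
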